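/- Let e₂, e₃ : [0, T̄) → ℝ be nonnegative differentiable functions, η̄(t) > 0 continuous on [0,T̄), with ė₃(t) ≤ -η̄(t)(e₃(t) - e₂(t)). Fix k ≥ 2 and suppose e₂(t) satisfies e₂(t) = ρ(t)^{-2}e^{-γt}e₂(0) where the solution of ż = -(1-1/k)η̄(t)z starting from z(a) at time a equals ρ(t)^{-2(1-1/k)}e^{-γ(1-1/k)(t-a)}ρ(a)^{2(1-1/k)}z(a) (with η̄(t) = γ + 2ρ̇(t)/ρ(t)). If e₃(0) ≥ k·e₂(0), then e₃(t) ≤ ρ(t)^{-2(1-1/k)}e^{-γ(1-1/k)t}e₃(0) for all t ∈ [0, T̄). -/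

import Mathlib

open Set Real

/-- Comparison bound in the PT analysis: if `ė₃ ≤ -η̄(t)(e₃ - e₂)` with
`e₂(t) = ρ(t)⁻² e^{-γt} e₂(0)`, the scaled dynamics `ż = -(1-1/k) η̄ z` has
the explicit solution formula, and `e₃(0) ≥ k e₂(0)`, then
`e₃(t) ≤ ρ(t)^{-2(1-1/k)} e^{-γ(1-1/k)t} e₃(0)` on `[0, T̄)`. -/
theorem stmt_9 (T h γ k : ℝ) (hT : 0 < T) (hh : 1 < h) (hγ : 0 < γ)
    (hk : 2 ≤ k) (ρ ηb e₂ e₃ e₃' : ℝ → ℝ)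
    (hρ : ∀ t ∈ Ico 0 T, ρ t = (T / (T - t)) ^ (1 + h))
    (hηb : ∀ t ∈ Ico 0 T, ηb t = γ + 2 * deriv ρ t / ρ t)
    (hηbpos : ∀ t ∈ Ico 0 T, 0 < ηb t)
    (he₂nn : ∀ t ∈ Ico 0 T, 0 ≤ e₂ t) (he₃nn : ∀ t ∈ Ico 0 T, 0 ≤ e₃ t)
    (he₃ : ∀ t ∈ Ico 0 T, HasDerivAt e₃ (e₃' t) t)
    (hineq : ∀ t ∈ Ico 0 T, e₃' t ≤ -ηb t * (e₃ t - e₂ t))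
    (he₂ : ∀ t ∈ Ico 0 T, e₂ t = (ρ t) ^ (-(2 : ℝ)) * Real.exp (-γ * t) * e₂ 0)
    (hsol : ∀ a ∈ Ico 0 T, ∀ (z : ℝ → ℝ) (za : ℝ), z a = za →
      (∀ t ∈ Ico a T, HasDerivAt z (-((1 - 1 / k) * ηb t) * z t) t) →
      ∀ t ∈ Ico a T, z t = (ρ t) ^ (-(2 * (1 - 1 / k))) *
        Real.exp (-γ * (1 - 1 / k) * (t - a)) * (ρ a) ^ (2 * (1 - 1 / k)) * za)
    (hinit : k * e₂ 0 ≤ e₃ 0) :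
    ∀ t ∈ Ico 0 T, e₃ t ≤ (ρ t) ^ (-(2 * (1 - 1 / k))) *
      Real.exp (-γ * (1 - 1 / k) * t) * e₃ 0 := by
  have hk0 : (0 : ℝ) < k := by linarith
  have hkinv : (0 : ℝ) < 1 / k := by positivity
  have hκpos : 0 < 1 - 1 / k := by
    have : 1 / k ≤ 1 / 2 := by
      rw [div_le_div_iff₀ hk0 two_pos]; linarith
    linarith
  set κ := 1 - 1 / k with hκdef
  have hh0 : (0 : ℝ) < 1 + h := by linarith
  set s := (1 + h) * (2 * κ) with hsdef
  have hspos : 0 < s := by rw [hsdef]; positivity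
  set g : ℝ → ℝ := fun t => e₃ t * ((T / (T - t)) ^ s * Real.exp (γ * κ * t)) with hgdef
  -- basic facts
  have hTt : ∀ t ∈ Ico (0 : ℝ) T, 0 < T - t := fun t ht => sub_pos.mpr ht.2
  have hb1 : ∀ t ∈ Ico (0 : ℝ) T, 1 ≤ T / (T - t) := fun t ht =>
    (one_le_div (hTt t ht)).mpr (by linarith [ht.1])
  have hb0 : ∀ t ∈ Ico (0 : ℝ) T, 0 < T / (T - t) := fun t ht =>
    lt_of_lt_of_le one_pos (hb1 t ht)
  have hQpos : ∀ t ∈ Ico (0 : ℝ) T, 0 < (T / (T - t)) ^ s * Real.exp (γ * κ * t) :=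
    fun t ht => mul_pos (Real.rpow_pos_of_pos (hb0 t ht) s) (Real.exp_pos _)
  have hmem0 : (0 : ℝ) ∈ Ico (0 : ℝ) T := ⟨le_refl 0, hT⟩
  have hg0 : g 0 = e₃ 0 := by
    simp only [hgdef, sub_zero, div_self hT.ne', Real.one_rpow, mul_zero, Real.exp_zero, mul_one]
  have hρpow : ∀ t ∈ Ico (0 : ℝ) T, ∀ y : ℝ, ρ t ^ y = (T / (T - t)) ^ ((1 + h) * y) := by
    intro t ht y
    rw [hρ t ht, ← Real.rpow_mul (hb0 t ht).le]
  -- small case bound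
  have hsmall : ∀ t ∈ Ico (0 : ℝ) T, e₃ t ≤ k * e₂ t → g t ≤ e₃ 0 := by
    intro t ht hle
    have hQ := hQpos t ht
    have key : e₂ t * ((T / (T - t)) ^ s * Real.exp (γ * κ * t)) =
        e₂ 0 * ((T / (T - t)) ^ ((1 + h) * (-(2 : ℝ)) + s) * Real.exp (γ * κ * t + -γ * t)) := by
      rw [he₂ t ht, hρpow t ht, Real.rpow_add (hb0 t ht), Real.exp_add]
      ring
    have hub : (T / (T - t)) ^ ((1 + h) * (-(2 : ℝ)) + s) ≤ 1 := by
      apply Real.rpow_le_one_of_one_le_of_nonpos (hb1 t ht)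
      have h2 : (1 + h) * (-(2 : ℝ)) + s = -((1 + h) * (2 / k)) := by
        rw [hsdef, hκdef]; ring
      rw [h2]
      have : 0 < (1 + h) * (2 / k) := by positivity
      linarith
    have hue : Real.exp (γ * κ * t + -γ * t) ≤ 1 := by
      rw [Real.exp_le_one_iff]
      have h8 : γ * κ * t + -γ * t = -(γ * t / k) := by rw [hκdef]; ring
      rw [h8]
      have h9 : 0 ≤ γ * t / k := div_nonneg (mul_nonneg hγ.le ht.1) hk0.le
      linarith
    have he20 : 0 ≤ e₂ 0 := he₂nn 0 hmem0
    have hbig : e₂ t * ((T / (T - t)) ^ s * Real.exp (γ * κ * t)) ≤ e₂ 0 := by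
      rw [key]
      have hXY : (T / (T - t)) ^ ((1 + h) * (-(2 : ℝ)) + s) * Real.exp (γ * κ * t + -γ * t) ≤ 1 :=
        mul_le_one₀ hub (Real.exp_pos _).le hue
      exact mul_le_of_le_one_right he20 hXY
    simp only [hgdef]
    calc e₃ t * ((T / (T - t)) ^ s * Real.exp (γ * κ * t))
        ≤ (k * e₂ t) * ((T / (T - t)) ^ s * Real.exp (γ * κ * t)) :=
          mul_le_mul_of_nonneg_right hle hQ.le
      _ = k * (e₂ t * ((T / (T - t)) ^ s * Real.exp (γ * κ * t))) := by ring
      _ ≤ k * e₂ 0 := mul_le_mul_of_nonneg_left hbig hk0.le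
      _ ≤ e₃ 0 := hinit
  -- derivatives
  have hbD : ∀ t ∈ Ico (0 : ℝ) T, HasDerivAt (fun u => T / (T - u)) (T / (T - t) ^ 2) t := by
    intro t ht
    have h1 : HasDerivAt (fun u : ℝ => T - u) (-1 : ℝ) t := (hasDerivAt_id t).const_sub T
    have h2 : HasDerivAt (fun u => T / (T - u)) ((0 * (T - t) - T * -1) / (T - t) ^ 2) t :=
      (hasDerivAt_const t T).div h1 (hTt t ht).ne'
    convert h2 using 1
    ring
  have hpowD : ∀ (y : ℝ), ∀ t ∈ Ico (0 : ℝ) T,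
      HasDerivAt (fun u => (T / (T - u)) ^ y) (y * (T / (T - t)) ^ y / (T - t)) t := by
    intro y t ht
    have h2 := (hbD t ht).rpow_const (p := y) (Or.inl (hb0 t ht).ne')
    convert h2 using 1
    rw [Real.rpow_sub_one (hb0 t ht).ne']
    field_simp [(hTt t ht).ne', hT.ne']
  have hED : ∀ t : ℝ, HasDerivAt (fun u => Real.exp (γ * κ * u)) (γ * κ * Real.exp (γ * κ * t)) t := by
    intro t
    have h2 := ((hasDerivAt_id t).const_mul (γ * κ)).exp
    convert h2 using 1
    simp only [id_eq]
    ring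
    simp only [id_eq]
  have hgd : ∀ t ∈ Ico (0 : ℝ) T, HasDerivAt g
      (e₃' t * ((T / (T - t)) ^ s * Real.exp (γ * κ * t)) +
        e₃ t * ((s * (T / (T - t)) ^ s / (T - t)) * Real.exp (γ * κ * t) +
          (T / (T - t)) ^ s * (γ * κ * Real.exp (γ * κ * t)))) t := by
    intro t ht
    rw [hgdef]
    exact (he₃ t ht).mul ((hpowD s t ht).mul (hED t))
  -- main argument
  intro t₀ ht₀
  suffices hmain : g t₀ ≤ e₃ 0 by
    have hQ := hQpos t₀ ht₀
    simp only [hgdef] at hmain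
    have hdiv : e₃ t₀ ≤ e₃ 0 / ((T / (T - t₀)) ^ s * Real.exp (γ * κ * t₀)) :=
      (le_div_iff₀ hQ).mpr hmain
    have h1 : (1 + h) * (-(2 * κ)) = -s := by rw [hsdef]; ring
    calc e₃ t₀ ≤ e₃ 0 / ((T / (T - t₀)) ^ s * Real.exp (γ * κ * t₀)) := hdiv
      _ = ρ t₀ ^ (-(2 * κ)) * Real.exp (-γ * κ * t₀) * e₃ 0 := by
          rw [hρpow t₀ ht₀, h1, Real.rpow_neg (hb0 t₀ ht₀).le,
            show -γ * κ * t₀ = -(γ * κ * t₀) by ring, Real.exp_neg,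
            div_eq_mul_inv, mul_inv]
          ring
  by_contra hcon
  push_neg at hcon
  have hsub : Icc (0 : ℝ) t₀ ⊆ Ico 0 T := fun x hx => ⟨hx.1, lt_of_le_of_lt hx.2 ht₀.2⟩
  have hcontg : ContinuousOn g (Icc 0 t₀) := fun x hx =>
    ((hgd x (hsub hx)).continuousAt).continuousWithinAt
  set S := Icc (0 : ℝ) t₀ ∩ g ⁻¹' (Iic (e₃ 0)) with hSdef
  have h0S : (0 : ℝ) ∈ S := ⟨⟨le_refl 0, ht₀.1⟩, by simp [hg0]⟩
  have hBdd : BddAbove S := ⟨t₀, fun x hx => hx.1.2⟩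
  have hScl : IsClosed S := hcontg.preimage_isClosed_of_isClosed isClosed_Icc isClosed_Iic
  set a := sSup S with haDef
  have haS : a ∈ S := hScl.csSup_mem ⟨0, h0S⟩ hBdd
  have hga : g a ≤ e₃ 0 := haS.2
  have ha0 : 0 ≤ a := le_csSup hBdd h0S
  have hat : a ≤ t₀ := haS.1.2
  have halt : a < t₀ := by
    rcases lt_or_eq_of_le hat with h' | h'
    · exact h'
    · exact absurd (h' ▸ hga) (not_le.mpr hcon)
  have hgt : ∀ x ∈ Ioc a t₀, e₃ 0 < g x := by
    intro x hx
    by_contra hle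
    push_neg at hle
    have hxS : x ∈ S := ⟨⟨le_trans ha0 hx.1.le, hx.2⟩, hle⟩
    exact absurd (le_csSup hBdd hxS) (not_le.mpr hx.1)
  have hanti : AntitoneOn g (Icc a t₀) := by
    apply antitoneOn_of_deriv_nonpos (convex_Icc a t₀)
      (hcontg.mono (Icc_subset_Icc ha0 le_rfl))
    · intro x hx
      rw [interior_Icc] at hx
      have hxIco : x ∈ Ico (0 : ℝ) T :=
        ⟨le_trans ha0 hx.1.le, lt_trans hx.2 ht₀.2⟩
      exact ((hgd x hxIco).differentiableAt).differentiableWithinAt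
    · intro x hx
      rw [interior_Icc] at hx
      have hxI : x ∈ Ioo (0 : ℝ) T := ⟨lt_of_le_of_lt ha0 hx.1, lt_trans hx.2 ht₀.2⟩
      have hxIco : x ∈ Ico (0 : ℝ) T := ⟨hxI.1.le, hxI.2⟩
      have hke : k * e₂ x ≤ e₃ x := by
        by_contra hkk
        push_neg at hkk
        exact absurd (hsmall x hxIco (by linarith)) (not_le.mpr (hgt x ⟨hx.1, hx.2.le⟩))
      have hTx := hTt x hxIco
      -- compute ηb x
      have hηeq : ηb x = γ + 2 * (1 + h) / (T - x) := by
        have heq : ρ =ᶠ[nhds x] fun u => (T / (T - u)) ^ (1 + h) := by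
          filter_upwards [Ioo_mem_nhds hxI.1 hxI.2] with u hu
          exact hρ u ⟨hu.1.le, hu.2⟩
        have hd : HasDerivAt ρ ((1 + h) * (T / (T - x)) ^ (1 + h) / (T - x)) x :=
          (hpowD (1 + h) x hxIco).congr_of_eventuallyEq heq
        have hρpos : (0 : ℝ) < (T / (T - x)) ^ (1 + h) :=
          Real.rpow_pos_of_pos (hb0 x hxIco) _
        rw [hηb x hxIco, hd.deriv, hρ x hxIco]
        field_simp
      have hQ := hQpos x hxIco
      have h6 : κ * ηb x = γ * κ + s / (T - x) := by
        rw [hηeq, hsdef]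
        field_simp
      have hstep : e₃' x ≤ -(γ * κ + s / (T - x)) * e₃ x := by
        have h2 : e₂ x ≤ e₃ x / k := (le_div_iff₀ hk0).mpr (by linarith)
        have h3 : κ * e₃ x = e₃ x - e₃ x / k := by rw [hκdef]; ring
        have h1 : κ * e₃ x ≤ e₃ x - e₂ x := by rw [h3]; linarith
        have h5 := mul_le_mul_of_nonneg_left h1 (hηbpos x hxIco).le
        calc e₃' x ≤ -ηb x * (e₃ x - e₂ x) := hineq x hxIco
          _ ≤ -ηb x * (κ * e₃ x) := by linarith
          _ = -(κ * ηb x) * e₃ x := by ring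
          _ = -(γ * κ + s / (T - x)) * e₃ x := by rw [h6]
      rw [(hgd x hxIco).deriv]
      have h7 := mul_le_mul_of_nonneg_right hstep hQ.le
      have heq2 : e₃ x * (s * (T / (T - x)) ^ s / (T - x) * Real.exp (γ * κ * x) +
          (T / (T - x)) ^ s * (γ * κ * Real.exp (γ * κ * x))) =
          (γ * κ + s / (T - x)) * e₃ x * ((T / (T - x)) ^ s * Real.exp (γ * κ * x)) := by
        ring
      rw [heq2]
      linarith [h7]
  have hfin : g t₀ ≤ g a := hanti ⟨le_rfl, hat⟩ ⟨hat, le_rfl⟩ hat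
  linarith
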